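/- Let H be a finite abelian group and let a : Fin n → Fin m → H be a matrix such that every column sums to zero (for each c ∈ Fin m, ∑_i a i c = 0). Then there is a partition of Fin n into nonempty parts, each of cardinality at most |H|^m, such that for every part P of the partition and every column c ∈ Fin m, ∑_{i∈P} a i c = 0. -/

import Mathlib

open Finset

lemma exists_small_block {H : Type} [AddCommGroup H] [Fintype H] {n m : ℕ}
    (a : Fin n → Fin m → H) (s : Finset (Fin n)) (hs : s.Nonempty)
    (hsum : ∀ c, ∑ i ∈ s, a i c = 0) :
    ∃ t ⊆ s, t.Nonempty ∧ t.card ≤ Fintype.card H ^ m ∧ ∀ c, ∑ i ∈ t, a i c = 0 := by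
  set K := Fintype.card H ^ m with hKdef
  by_cases hK : s.card ≤ K
  · exact ⟨s, Finset.Subset.refl s, hs, hK, hsum⟩
  push_neg at hK
  set e := s.orderIsoOfFin rfl with he
  set g : Fin (K + 1) → (Fin m → H) :=
    fun k c => ∑ i ∈ univ.filter (fun i : Fin s.card => (i : ℕ) < (k : ℕ)), a (e i) c with hg
  have hcard : Fintype.card (Fin m → H) < Fintype.card (Fin (K + 1)) := by
    simp [Fintype.card_fun, hKdef]
  obtain ⟨k, l, hkl, hgkl⟩ := Fintype.exists_ne_map_eq_of_card_lt g hcard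
  wlog hlt : (k : ℕ) < (l : ℕ) generalizing k l
  · exact this l k hkl.symm hgkl.symm
      (lt_of_le_of_ne (le_of_not_gt hlt) (fun hq => hkl (Fin.ext hq.symm)))
  set t0 : Finset (Fin s.card) :=
    univ.filter (fun i : Fin s.card => (k : ℕ) ≤ (i : ℕ) ∧ (i : ℕ) < (l : ℕ)) with ht0
  have hsplit : ∀ c, ∑ i ∈ t0, a (e i) c = 0 := by
    intro c
    have h1 : (univ.filter (fun i : Fin s.card => (i : ℕ) < (l : ℕ)))
        = (univ.filter (fun i : Fin s.card => (i : ℕ) < (k : ℕ))) ∪ t0 := by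
      ext i; simp only [mem_filter, mem_univ, true_and, mem_union, ht0]; omega
    have hdisj : Disjoint (univ.filter (fun i : Fin s.card => (i : ℕ) < (k : ℕ))) t0 := by
      rw [Finset.disjoint_left]; intro i hi hi'
      simp only [mem_filter, mem_univ, true_and, ht0] at hi hi'; omega
    have := congrFun hgkl c
    rw [hg] at this
    simp only at this
    rw [h1, Finset.sum_union hdisj] at this
    linear_combination (norm := abel) -this
  have hls : (l : ℕ) ≤ K := Nat.lt_succ_iff.mp l.isLt
  have hks : (k : ℕ) < s.card := lt_of_le_of_lt (le_of_lt (lt_of_lt_of_le hlt hls)) hK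
  refine ⟨t0.image (fun i => (e i : Fin n)), ?_, ?_, ?_, ?_⟩
  · intro x hx
    obtain ⟨i, _, rfl⟩ := Finset.mem_image.mp hx
    exact (e i).2
  · exact ⟨e ⟨k, hks⟩, Finset.mem_image_of_mem _ (by simp [ht0]; omega)⟩
  · have hinj : Function.Injective (fun i : Fin s.card => (e i : Fin n)) := by
      intro i j hij
      exact e.injective (Subtype.ext hij)
    rw [Finset.card_image_of_injective _ hinj]
    calc t0.card ≤ (Finset.Ico (k : ℕ) (l : ℕ)).card := by
          refine Finset.card_le_card_of_injOn (fun i : Fin s.card => (i : ℕ)) ?_ ?_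
          · intro i hi; simp only [Finset.mem_coe, mem_filter, mem_univ, true_and, ht0] at hi
            simp [Finset.mem_Ico]; omega
          · intro i _ j _ hij; exact Fin.ext hij
      _ ≤ K := by rw [Nat.card_Ico]; omega
  · intro c
    rw [Finset.sum_image (fun i _ j _ hij => e.injective (Subtype.ext hij))]
    exact hsplit c

lemma exists_finpartition_block {H : Type} [AddCommGroup H] [Fintype H] {n m : ℕ}
    (a : Fin n → Fin m → H) (s : Finset (Fin n)) (hsum : ∀ c, ∑ i ∈ s, a i c = 0) :
    ∃ P : Finpartition s,
      ∀ p ∈ P.parts, p.card ≤ Fintype.card H ^ m ∧ ∀ c : Fin m, ∑ i ∈ p, a i c = 0 := by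
  induction s using Finset.strongInduction with
  | _ s ih =>
    rcases s.eq_empty_or_nonempty with rfl | hs
    · exact ⟨(Finpartition.empty _), by simp⟩
    obtain ⟨t, hts, htne, htcard, htsum⟩ := exists_small_block a s hs hsum
    have hsum' : ∀ c, ∑ i ∈ s \ t, a i c = 0 := by
      intro c
      have := Finset.sum_sdiff (f := fun i => a i c) hts
      rw [htsum c, add_zero] at this
      rw [this, hsum c]
    have hssub : s \ t ⊂ s := Finset.sdiff_ssubset hts htne
    obtain ⟨P', hP'⟩ := ih (s \ t) hssub hsum'
    refine ⟨P'.extend (a := s \ t) (b := t) (c := s)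
      (Finset.nonempty_iff_ne_empty.mp htne) Finset.sdiff_disjoint ?_, ?_⟩
    · rw [Finset.sup_eq_union, Finset.sdiff_union_of_subset hts]
    · intro p hp
      rw [Finpartition.extend_parts, Finset.mem_insert] at hp
      rcases hp with rfl | hp
      · exact ⟨htcard, htsum⟩
      · exact hP' p hp

/-- Let `H` be a finite abelian group and `a : Fin n → Fin m → H` a matrix each of whose
columns sums to zero.  Then there is a partition of `Fin n` (encoded as a `Finpartition`
of `Finset.univ`, whose parts are nonempty by definition) into parts of cardinality at
most `|H|^m` such that, for every part `P` and every column `c`, `∑ i ∈ P, a i c = 0`. -/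
theorem subdivision_lemma (H : Type) [AddCommGroup H] [Fintype H] (n m : ℕ)
    (a : Fin n → Fin m → H) (h : ∀ c : Fin m, ∑ i : Fin n, a i c = 0) :
    ∃ P : Finpartition (Finset.univ : Finset (Fin n)),
      ∀ p ∈ P.parts, p.card ≤ Fintype.card H ^ m ∧ ∀ c : Fin m, ∑ i ∈ p, a i c = 0 :=
  exists_finpartition_block a Finset.univ h
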